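/- arXiv:1103.1855 — 3 statements merged into one kernel-verified Lean document; each statement's English description precedes it below -/
import Mathlib

section
/- For any field K of characteristic different from 2 and n ≥ 2, every alternating bilinear form on M_n(K) invariant under simultaneous conjugation by GL_n(K) is zero. -/
open Matrix

section Aux

variable {K : Type*} [Field K] {n : ℕ}

private def permMat (σ : Equiv.Perm (Fin n)) : Matrix (Fin n) (Fin n) K :=
  Matrix.of fun a b => if a = σ b then (1 : K) else 0

private lemma permMat_mul_self (σ : Equiv.Perm (Fin n)) (hσ : ∀ x, σ (σ x) = x) :
    (permMat σ : Matrix (Fin n) (Fin n) K) * permMat σ = 1 := by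
  ext a b
  simp only [mul_apply, permMat, Matrix.of_apply, one_apply]
  rw [Finset.sum_eq_single (σ b)]
  · simp [hσ]
  · intro c _ hc
    rw [if_neg hc, mul_zero]
  · simp

private lemma permMat_mul_std (σ : Equiv.Perm (Fin n)) (i j : Fin n) :
    (permMat σ : Matrix (Fin n) (Fin n) K) * Matrix.single i j 1 =
      Matrix.single (σ i) j 1 := by
  ext a b
  simp only [mul_apply, permMat, Matrix.of_apply, Matrix.single, Matrix.of_apply]
  rw [Finset.sum_eq_single i]
  · split_ifs <;> simp_all
  · intro c _ hc
    have : ¬ (i = c ∧ j = b) := fun h => hc h.1.symm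
    rw [if_neg this, mul_zero]
  · simp

private lemma std_mul_permMat (σ : Equiv.Perm (Fin n)) (hσ : ∀ x, σ (σ x) = x) (i j : Fin n) :
    Matrix.single i j 1 * (permMat σ : Matrix (Fin n) (Fin n) K) =
      Matrix.single i (σ j) 1 := by
  ext a b
  simp only [mul_apply, permMat, Matrix.of_apply, Matrix.single, Matrix.of_apply]
  rw [Finset.sum_eq_single j]
  · have hjb : (j = σ b) ↔ (σ j = b) := by
      constructor
      · intro h; rw [h, hσ]
      · intro h; rw [← h, hσ]
    split_ifs <;> simp_all
  · intro c _ hc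
    have : ¬ (i = a ∧ j = c) := fun h => hc h.2.symm
    rw [if_neg this, zero_mul]
  · simp

private lemma permMat_conj (σ : Equiv.Perm (Fin n)) (hσ : ∀ x, σ (σ x) = x) (i j : Fin n) :
    (permMat σ : Matrix (Fin n) (Fin n) K) * Matrix.single i j 1 * permMat σ =
      Matrix.single (σ i) (σ j) 1 := by
  rw [permMat_mul_std, std_mul_permMat σ hσ]

private def sgn (p q : Fin n) : K := if q = p then (-1 : K) else 1

private lemma sgn_mul_self (p q : Fin n) : sgn p q * sgn p q = (1 : K) := by
  unfold sgn; split_ifs <;> ring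

private def signMat (p : Fin n) : Matrix (Fin n) (Fin n) K := diagonal (sgn p)

private lemma signMat_mul_self (p : Fin n) :
    (signMat p : Matrix (Fin n) (Fin n) K) * signMat p = 1 := by
  rw [signMat, diagonal_mul_diagonal]
  rw [show (fun q => sgn p q * sgn p q) = fun _ => (1 : K) from funext fun q => sgn_mul_self p q]
  exact diagonal_one

private lemma signMat_conj (p i j : Fin n) :
    (signMat p : Matrix (Fin n) (Fin n) K) * Matrix.single i j (1 : K) * signMat p =
      ((sgn p i * sgn p j : K)) • Matrix.single i j (1 : K) := by
  ext a b
  simp only [signMat, diagonal_mul, mul_diagonal, Matrix.smul_apply, Matrix.single,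
    Matrix.of_apply, smul_eq_mul]
  by_cases h : i = a ∧ j = b
  · obtain ⟨h1, h2⟩ := h
    subst h1; subst h2
    simp only [if_pos (⟨rfl, rfl⟩ : i = i ∧ j = j)]
    ring
  · simp only [if_neg h]
    ring

end Aux

private lemma sgn_self {K : Type*} [Field K] {n : ℕ} (p : Fin n) : (sgn p p : K) = -1 := by
  unfold sgn; exact if_pos rfl

private lemma sgn_ne {K : Type*} [Field K] {n : ℕ} {p q : Fin n} (h : ¬ q = p) :
    (sgn p q : K) = 1 := by
  unfold sgn; exact if_neg h

/-- For a field `K` of characteristic `≠ 2` and `n ≥ 2`, every alternating bilinear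
form on `M_n(K)` invariant under simultaneous conjugation by `GL_n(K)` is zero. -/
theorem invariant_alternating_forms_trivial (K : Type*) [Field K] (hchar : ringChar K ≠ 2)
    (n : ℕ) (hn : 2 ≤ n)
    (β : Matrix (Fin n) (Fin n) K →ₗ[K] Matrix (Fin n) (Fin n) K →ₗ[K] K)
    (hinv : ∀ g : Matrix (Fin n) (Fin n) K, IsUnit g →
      ∀ A B, β (g * A * g⁻¹) (g * B * g⁻¹) = β A B)
    (halt : ∀ A, β A A = 0) :
    β = 0 := by
  have h2 : (2 : K) ≠ 0 := Ring.two_ne_zero hchar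
  have hhalf : ∀ x : K, x = -x → x = 0 := by
    intro x hx
    have hx2 : 2 * x = 0 := by rw [two_mul]; linear_combination hx
    rcases mul_eq_zero.mp hx2 with h | h
    · exact absurd h h2
    · exact h
  have hskew : ∀ A B, β A B = - β B A := by
    intro A B
    have h := halt (A + B)
    simp only [map_add, LinearMap.add_apply] at h
    rw [halt A, halt B] at h
    linear_combination h
  have hinv' : ∀ g : Matrix (Fin n) (Fin n) K, g * g = 1 →
      ∀ A B, β (g * A * g) (g * B * g) = β A B := by
    intro g hg A B
    have hu : IsUnit g := ⟨⟨g, g, hg, hg⟩, rfl⟩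
    have hginv : g⁻¹ = g := inv_eq_right_inv hg
    have h := hinv g hu A B
    rwa [hginv] at h
  have hperm : ∀ σ : Equiv.Perm (Fin n), (∀ x, σ (σ x) = x) → ∀ i j k l : Fin n,
      β (Matrix.single (σ i) (σ j) 1) (Matrix.single (σ k) (σ l) 1) =
      β (Matrix.single i j 1) (Matrix.single k l 1) := by
    intro σ hσ i j k l
    have h := hinv' (permMat σ) (permMat_mul_self σ hσ) (Matrix.single i j 1)
      (Matrix.single k l 1)
    rwa [permMat_conj σ hσ, permMat_conj σ hσ] at h
  have hodd : ∀ p i j k l : Fin n,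
      (sgn p i * sgn p j * (sgn p k * sgn p l) : K) = -1 →
      β (Matrix.single i j 1) (Matrix.single k l 1) = 0 := by
    intro p i j k l hs
    have h := hinv' (signMat p) (signMat_mul_self p) (Matrix.single i j 1)
      (Matrix.single k l 1)
    rw [signMat_conj, signMat_conj, LinearMap.map_smul, LinearMap.map_smul₂, smul_smul, smul_eq_mul] at h
    apply hhalf
    linear_combination -h + (β (Matrix.single i j 1)) (Matrix.single k l 1) * hs
  have key : ∀ i j k l : Fin n,
      β (Matrix.single i j 1) (Matrix.single k l 1) = 0 := by
    intro i j k l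
    by_cases hij : i = j
    · subst hij
      by_cases hkl : k = l
      · subst hkl
        by_cases hik : i = k
        · subst hik; exact halt _
        · have hswap := hperm (Equiv.swap i k) (fun x => Equiv.swap_apply_self i k x) i i k k
          rw [Equiv.swap_apply_left, Equiv.swap_apply_right] at hswap
          have hs := hskew (Matrix.single i i 1) (Matrix.single k k 1)
          apply hhalf
          linear_combination hs - hswap
      · apply hodd k
        rw [sgn_mul_self, sgn_self, sgn_ne (fun h : l = k => hkl h.symm)]
        ring
    · by_cases hkl : k = l
      · subst hkl
        apply hodd i
        rw [sgn_self, sgn_ne (fun h : j = i => hij h.symm), sgn_mul_self]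
        ring
      · by_cases hik : i = k
        · subst hik
          by_cases hjl : j = l
          · subst hjl; exact halt _
          · apply hodd j
            rw [sgn_self, sgn_ne hij, sgn_ne (fun h : l = j => hjl h.symm)]
            ring
        · by_cases hil : i = l
          · subst hil
            by_cases hjk : j = k
            · subst hjk
              have hswap := hperm (Equiv.swap i j) (fun x => Equiv.swap_apply_self i j x) i j j i
              rw [Equiv.swap_apply_left, Equiv.swap_apply_right] at hswap
              have hs := hskew (Matrix.single i j 1) (Matrix.single j i 1)
              apply hhalf
              linear_combination hs - hswap
            · apply hodd j
              rw [sgn_self, sgn_ne hij, sgn_ne (fun h : k = j => hjk h.symm)]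
              ring
          · apply hodd i
            rw [sgn_self, sgn_ne (fun h : j = i => hij h.symm),
              sgn_ne (fun h : k = i => hik h.symm), sgn_ne (fun h : l = i => hil h.symm)]
            ring
  have main : ∀ A B, β A B = 0 := by
    intro A B
    rw [matrix_eq_sum_single A, matrix_eq_sum_single B]
    simp only [map_sum, LinearMap.sum_apply]
    apply Finset.sum_eq_zero; intro i _
    apply Finset.sum_eq_zero; intro j _
    apply Finset.sum_eq_zero; intro k _
    apply Finset.sum_eq_zero; intro l _
    have hA : Matrix.single k l (A k l) = (A k l) • Matrix.single k l (1 : K) := by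
      rw [smul_single, smul_eq_mul, mul_one]
    have hB : Matrix.single i j (B i j) = (B i j) • Matrix.single i j (1 : K) := by
      rw [smul_single, smul_eq_mul, mul_one]
    rw [hA, hB, LinearMap.map_smul₂, LinearMap.map_smul, key, smul_zero, smul_zero]
  apply LinearMap.ext
  intro A
  apply LinearMap.ext
  intro B
  simp [main A B]
end

section
/- The symmetric bilinear form on (Z/4Z)² with matrix ((2,1),(1,2)) is nondegenerate (its determinant 3 is a unit in Z/4Z), has trivial discriminant in (Z/4Z)*/((Z/4Z)*)², and represents a nonzero element of order 2 in the Witt ring W(Z/4Z). -/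
open Matrix

namespace WittZ4

/-- A nondegenerate symmetric bilinear form on a finitely generated free
`Z/4Z`-module, presented by its Gram matrix. -/
structure QF where
  m : ℕ
  G : Matrix (Fin m) (Fin m) (ZMod 4)
  symm : G.IsSymm
  nondeg : IsUnit G.det

/-- Isometry of forms: an invertible change of basis carrying one Gram matrix
to the other. -/
def Isometric (a b : QF) : Prop :=
  ∃ h : a.m = b.m, ∃ P : Matrix (Fin b.m) (Fin b.m) (ZMod 4), IsUnit P.det ∧
    Pᵀ * (Matrix.reindex (finCongr h) (finCongr h) a.G) * P = b.G

/-- Orthogonal (block-diagonal) sum of forms. -/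
def orthSum (a b : QF) : QF where
  m := a.m + b.m
  G := Matrix.reindex finSumFinEquiv finSumFinEquiv (Matrix.fromBlocks a.G 0 0 b.G)
  symm := by
    simp [Matrix.IsSymm, Matrix.transpose_reindex, Matrix.fromBlocks_transpose,
      a.symm.eq, b.symm.eq]
  nondeg := by
    rw [Matrix.det_reindex_self, Matrix.det_fromBlocks_zero₂₁]
    exact a.nondeg.mul b.nondeg

end WittZ4

namespace WittZ4

/-- The bilinear pairing associated to a form. -/
def pair (a : QF) (x y : Fin a.m → ZMod 4) : ZMod 4 :=
  dotProduct x (a.G.mulVec y)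

/-- The orthogonal complement of a submodule with respect to a form. -/
def orthCompl (a : QF) (N : Submodule (ZMod 4) (Fin a.m → ZMod 4)) :
    Submodule (ZMod 4) (Fin a.m → ZMod 4) where
  carrier := {x | ∀ y ∈ N, pair a x y = 0}
  zero_mem' := by intro y hy; simp [pair]
  add_mem' := by
    intro x z hx hz y hy
    have h1 : pair a x y = 0 := hx y hy
    have h2 : pair a z y = 0 := hz y hy
    simp only [pair] at h1 h2
    simp [pair, add_dotProduct, h1, h2]
  smul_mem' := by
    intro c x hx y hy
    have h1 : pair a x y = 0 := hx y hy
    simp only [pair] at h1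
    simp [pair, smul_dotProduct, h1]

/-- A form is split if the underlying module contains a direct summand `N`
with `N = N^⊥`. -/
def IsSplit (a : QF) : Prop :=
  ∃ N : Submodule (ZMod 4) (Fin a.m → ZMod 4),
    (∃ N', IsCompl N N') ∧ N = orthCompl a N

/-- Witt equivalence: two forms represent the same class in the Witt ring iff
they become isometric after adding split forms. -/
def WittEquiv (a b : QF) : Prop :=
  ∃ s t : QF, IsSplit s ∧ IsSplit t ∧ Isometric (orthSum a s) (orthSum b t)

/-- The zero form (on the zero module). -/
def zeroForm : QF :=
  ⟨0, 1, Matrix.isSymm_one, by simp⟩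

/-- The rank-one form `⟨1⟩`. -/
def oneForm : QF :=
  ⟨1, Matrix.of fun _ _ => (1 : ZMod 4), by ext i j; rfl,
    by simp [Matrix.det_fin_one]⟩

/-- The rank-one form `⟨-1⟩`. -/
def negOneForm : QF :=
  ⟨1, Matrix.of fun _ _ => (-1 : ZMod 4), by ext i j; rfl,
    by simp [Matrix.det_fin_one]⟩

/-- The rank-two form `ω` with Gram matrix `((2,1),(1,2))`. -/
def omegaForm : QF :=
  ⟨2, !![2, 1; 1, 2], by decide,
    IsUnit.of_mul_eq_one 3 (by decide)⟩

/-- `j` orthogonal copies of a form. -/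
def copies : ℕ → QF → QF
  | 0, _ => zeroForm
  | j + 1, a => orthSum (copies j a) a

end WittZ4

namespace WittZ4


section AuxiliaryLemmas

/-! ### Auxiliary lemmas: a Gauss-sum invariant of forms -/

noncomputable def chi (z : ZMod 4) : ℂ := Complex.I ^ z.val

lemma chi_add (a b : ZMod 4) : chi (a + b) = chi a * chi b := by
  unfold chi
  rw [← pow_add, ZMod.val_add]
  conv_rhs => rw [← Nat.div_add_mod (a.val + b.val) 4, pow_add, pow_mul,
    Complex.I_pow_four, one_pow, one_mul]

lemma chi_zero : chi 0 = 1 := by simp [chi]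

lemma chi_two : chi 2 = -1 := by
  show Complex.I ^ (2 : ZMod 4).val = -1
  norm_num [show (2 : ZMod 4).val = 2 from rfl, Complex.I_sq]

noncomputable def tau (ι : Type) [Fintype ι] [DecidableEq ι] (G : Matrix ι ι (ZMod 4)) : ℂ :=
  ∑ x : ι → ZMod 4, chi (x ⬝ᵥ (G *ᵥ x))

lemma tau_reindex {ι κ : Type} [Fintype ι] [Fintype κ] [DecidableEq ι] [DecidableEq κ]
    (e : ι ≃ κ) (G : Matrix ι ι (ZMod 4)) :
    tau κ (Matrix.reindex e e G) = tau ι G := by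
  unfold tau
  rw [← Equiv.sum_comp (Equiv.arrowCongr e (Equiv.refl (ZMod 4)))]
  refine Finset.sum_congr rfl fun y _ => ?_
  congr 1
  have h1 : (Equiv.arrowCongr e (Equiv.refl (ZMod 4))) y = y ∘ e.symm := rfl
  rw [h1]
  show (y ∘ e.symm) ⬝ᵥ (G.submatrix e.symm e.symm *ᵥ (y ∘ e.symm)) = _
  rw [Matrix.submatrix_mulVec_equiv G (y ∘ e.symm) e.symm e.symm]
  have : (y ∘ ⇑e.symm) ∘ ⇑e.symm.symm = y := by ext i; simp
  rw [this]
  exact Equiv.sum_comp e.symm (fun i => y i * (G *ᵥ y) i)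

lemma tau_fromBlocks {ι κ : Type} [Fintype ι] [Fintype κ] [DecidableEq ι] [DecidableEq κ]
    (A : Matrix ι ι (ZMod 4)) (B : Matrix κ κ (ZMod 4)) :
    tau (ι ⊕ κ) (Matrix.fromBlocks A 0 0 B) = tau ι A * tau κ B := by
  unfold tau
  rw [← Equiv.sum_comp (Equiv.sumArrowEquivProdArrow ι κ (ZMod 4)).symm, Fintype.sum_prod_type,
    Finset.sum_mul_sum]
  refine Finset.sum_congr rfl fun u _ => Finset.sum_congr rfl fun v _ => ?_
  rw [← chi_add]
  congr 1
  have h1 : (Equiv.sumArrowEquivProdArrow ι κ (ZMod 4)).symm (u, v) = Sum.elim u v := rfl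
  rw [h1, Matrix.fromBlocks_mulVec]
  have h2 : Sum.elim u v ∘ Sum.inl = u := rfl
  have h3 : Sum.elim u v ∘ Sum.inr = v := rfl
  rw [h2, h3]
  simp only [Matrix.zero_mulVec, add_zero, zero_add]
  exact sumElim_dotProduct_sumElim u (A *ᵥ u) v (B *ᵥ v)

lemma tau_conj {n : ℕ} (A P : Matrix (Fin n) (Fin n) (ZMod 4)) (hP : IsUnit P.det) :
    tau (Fin n) (Pᵀ * A * P) = tau (Fin n) A := by
  have : Invertible P := Matrix.invertibleOfIsUnitDet P hP
  let e : (Fin n → ZMod 4) ≃ (Fin n → ZMod 4) :=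
    { toFun := fun v => P *ᵥ v
      invFun := fun v => (⅟P) *ᵥ v
      left_inv := fun v => by
        show ⅟P *ᵥ (P *ᵥ v) = v
        rw [Matrix.mulVec_mulVec, invOf_mul_self, Matrix.one_mulVec]
      right_inv := fun v => by
        show P *ᵥ (⅟P *ᵥ v) = v
        rw [Matrix.mulVec_mulVec, mul_invOf_self, Matrix.one_mulVec] }
  unfold tau
  rw [← Equiv.sum_comp e (fun x => chi (x ⬝ᵥ (A *ᵥ x)))]
  refine Finset.sum_congr rfl fun x _ => ?_
  congr 1
  show x ⬝ᵥ ((Pᵀ * A * P) *ᵥ x) = (P *ᵥ x) ⬝ᵥ (A *ᵥ (P *ᵥ x))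
  rw [← Matrix.mulVec_mulVec, ← Matrix.mulVec_mulVec, Matrix.dotProduct_mulVec x Pᵀ,
    Matrix.vecMul_transpose]

lemma tau_isometric {a b : QF} (h : Isometric a b) :
    tau (Fin a.m) a.G = tau (Fin b.m) b.G := by
  obtain ⟨hm, P, hP, hG⟩ := h
  rw [← hG, tau_conj _ P hP, tau_reindex (finCongr hm)]

lemma tau_orthSum (a b : QF) :
    tau (Fin (orthSum a b).m) (orthSum a b).G = tau (Fin a.m) a.G * tau (Fin b.m) b.G := by
  show tau (Fin (a.m + b.m))
      (Matrix.reindex finSumFinEquiv finSumFinEquiv (Matrix.fromBlocks a.G 0 0 b.G))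
    = tau (Fin a.m) a.G * tau (Fin b.m) b.G
  rw [tau_reindex, tau_fromBlocks]

lemma tau_zeroForm : tau (Fin zeroForm.m) zeroForm.G = 1 := by
  show tau (Fin 0) (1 : Matrix (Fin 0) (Fin 0) (ZMod 4)) = 1
  unfold tau
  rw [Fintype.sum_unique]
  simp [dotProduct, chi_zero]

lemma tau_omega : tau (Fin omegaForm.m) omegaForm.G = -8 := by
  show tau (Fin 2) (!![2, 1; 1, 2] : Matrix (Fin 2) (Fin 2) (ZMod 4)) = -8
  unfold tau
  have hq : ∀ x : Fin 2 → ZMod 4,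
      x ⬝ᵥ ((!![2, 1; 1, 2] : Matrix (Fin 2) (Fin 2) (ZMod 4)) *ᵥ x) = 0 ∨
      x ⬝ᵥ ((!![2, 1; 1, 2] : Matrix (Fin 2) (Fin 2) (ZMod 4)) *ᵥ x) = 2 := by decide
  have hpt : ∀ x : Fin 2 → ZMod 4,
      chi (x ⬝ᵥ ((!![2, 1; 1, 2] : Matrix (Fin 2) (Fin 2) (ZMod 4)) *ᵥ x))
        = if x ⬝ᵥ ((!![2, 1; 1, 2] : Matrix (Fin 2) (Fin 2) (ZMod 4)) *ᵥ x) = 0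
          then 1 else -1 := by
    intro x
    rcases hq x with h | h <;> rw [h] <;>
      simp [chi_zero, chi_two, show (2 : ZMod 4) ≠ 0 by decide]
  rw [Finset.sum_congr rfl (fun x _ => hpt x), Finset.sum_ite, Finset.sum_const,
    Finset.sum_const]
  have h1 : (Finset.univ.filter (fun x : Fin 2 → ZMod 4 =>
      x ⬝ᵥ ((!![2, 1; 1, 2] : Matrix (Fin 2) (Fin 2) (ZMod 4)) *ᵥ x) = 0)).card = 4 := by
    decide
  have h2 : (Finset.univ.filter (fun x : Fin 2 → ZMod 4 =>
      ¬ x ⬝ᵥ ((!![2, 1; 1, 2] : Matrix (Fin 2) (Fin 2) (ZMod 4)) *ᵥ x) = 0)).card = 12 := by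
    decide
  rw [h1, h2]
  norm_num

/-! ### Bilinearity of `pair` -/

lemma pair_add_left (a : QF) (x y z : Fin a.m → ZMod 4) :
    pair a (x + y) z = pair a x z + pair a y z := add_dotProduct x y _

lemma pair_add_right (a : QF) (x y z : Fin a.m → ZMod 4) :
    pair a x (y + z) = pair a x y + pair a x z := by
  unfold pair; rw [Matrix.mulVec_add, dotProduct_add]

lemma pair_smul_left (a : QF) (c : ZMod 4) (x y : Fin a.m → ZMod 4) :
    pair a (c • x) y = c * pair a x y := smul_dotProduct c x _

lemma pair_smul_right (a : QF) (c : ZMod 4) (x y : Fin a.m → ZMod 4) :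
    pair a x (c • y) = c * pair a x y := by
  unfold pair; rw [Matrix.mulVec_smul, dotProduct_smul]; rfl

lemma pair_zero_left (a : QF) (y : Fin a.m → ZMod 4) : pair a 0 y = 0 :=
  zero_dotProduct _

lemma pair_symm (a : QF) (x y : Fin a.m → ZMod 4) : pair a x y = pair a y x := by
  unfold pair
  rw [Matrix.dotProduct_mulVec]
  have hv : x ᵥ* a.G = a.G *ᵥ x := by
    conv_lhs => rw [← a.symm]
    exact Matrix.vecMul_transpose a.G x
  rw [hv, dotProduct_comm]

lemma tau_pair (a : QF) : tau (Fin a.m) a.G = ∑ x : Fin a.m → ZMod 4, chi (pair a x x) := rfl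

/-! ### The Gauss sum of a split form is a positive natural number -/

lemma tau_split (s : QF) (hs : IsSplit s) : ∃ c : ℕ, 0 < c ∧ tau (Fin s.m) s.G = c := by
  classical
  obtain ⟨N, ⟨N', hc⟩, hN⟩ := hs
  have hqN : ∀ x ∈ N, pair s x x = 0 := by
    intro x hx
    have hx' := hx
    rw [hN] at hx'
    exact hx' x hx
  set e := Submodule.prodEquivOfIsCompl N N' hc with he
  have hcoe : ∀ p : ↥N × ↥N', (e p : Fin s.m → ZMod 4) = ↑p.1 + ↑p.2 := by
    intro p; simp [he, Submodule.coe_prodEquivOfIsCompl]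
  have key : ∀ (n : ↥N) (n' : ↥N'),
      pair s (↑n + ↑n') (↑n + ↑n')
        = (pair s (↑n' : Fin s.m → ZMod 4) ↑n + pair s (↑n' : Fin s.m → ZMod 4) ↑n)
          + pair s (↑n' : Fin s.m → ZMod 4) ↑n' := by
    intro n n'
    rw [pair_add_left, pair_add_right, pair_add_right, hqN _ n.2,
      pair_symm s (↑n : Fin s.m → ZMod 4) ↑n']
    ring
  set g : ↥N' → ℕ := fun n' =>
    if ∀ y ∈ N, pair s (↑n' : Fin s.m → ZMod 4) y + pair s (↑n' : Fin s.m → ZMod 4) y = 0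
    then Fintype.card ↥N else 0 with hg
  have inner : ∀ n' : ↥N',
      (∑ n : ↥N, chi (pair s (↑n + ↑n') (↑n + ↑n'))) = (g n' : ℂ) := by
    intro n'
    by_cases hcase : ∀ y ∈ N,
        pair s (↑n' : Fin s.m → ZMod 4) y + pair s (↑n' : Fin s.m → ZMod 4) y = 0
    · have h2mem : ((2 : ZMod 4) • (↑n' : Fin s.m → ZMod 4)) ∈ N := by
        rw [hN]
        intro y hy
        rw [pair_smul_left]
        have := hcase y hy
        rw [two_mul]
        exact this
      have h2mem' : ((2 : ZMod 4) • (↑n' : Fin s.m → ZMod 4)) ∈ N' :=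
        N'.smul_mem _ n'.2
      have h20 : ((2 : ZMod 4) • (↑n' : Fin s.m → ZMod 4)) = 0 :=
        Submodule.disjoint_def.mp hc.disjoint _ h2mem h2mem'
      have hn2a : (↑n' : Fin s.m → ZMod 4)
          = (2 : ZMod 4) • (fun i => if (↑n' : Fin s.m → ZMod 4) i = 2
              then (1 : ZMod 4) else 0) := by
        funext i
        have hz : (2 : ZMod 4) * (↑n' : Fin s.m → ZMod 4) i = 0 := by
          have := congrFun h20 i
          rwa [Pi.smul_apply, smul_eq_mul] at this
        rw [Pi.smul_apply, smul_eq_mul]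
        have hdec : ∀ z : ZMod 4, 2 * z = 0 → z = 2 * (if z = 2 then 1 else 0) := by decide
        exact hdec _ hz
      have hq0 : pair s (↑n' : Fin s.m → ZMod 4) ↑n' = 0 := by
        rw [hn2a, pair_smul_left, pair_smul_right, ← mul_assoc,
          show ((2 : ZMod 4) * 2) = 0 from by decide, zero_mul]
      have : ∀ n : ↥N, chi (pair s (↑n + ↑n') (↑n + ↑n')) = 1 := by
        intro n
        rw [key, hcase _ n.2, hq0, add_zero, chi_zero]
      rw [Finset.sum_congr rfl fun n _ => this n, Finset.sum_const, Finset.card_univ,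
        nsmul_eq_mul, mul_one, hg]
      simp only []
      rw [if_pos hcase]
    · push_neg at hcase
      obtain ⟨y, hy, hne⟩ := hcase
      have hval : pair s (↑n' : Fin s.m → ZMod 4) y + pair s (↑n' : Fin s.m → ZMod 4) y = 2 := by
        revert hne
        generalize pair s (↑n' : Fin s.m → ZMod 4) y = z
        revert z; decide
      set n₀ : ↥N := ⟨y, hy⟩ with hn₀
      set f : ↥N → ℂ := fun n => chi (pair s (↑n + ↑n') (↑n + ↑n')) with hf
      have hshift : ∀ n : ↥N, f (n + n₀) = - f n := by
        intro n
        rw [hf]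
        simp only []
        rw [key, key]
        have hcoe2 : ((n + n₀ : ↥N) : Fin s.m → ZMod 4) = ↑n + y := rfl
        rw [hcoe2, pair_add_right]
        have harr : pair s (↑n' : Fin s.m → ZMod 4) ↑n + pair s (↑n' : Fin s.m → ZMod 4) y
            + (pair s (↑n' : Fin s.m → ZMod 4) ↑n + pair s (↑n' : Fin s.m → ZMod 4) y)
            + pair s (↑n' : Fin s.m → ZMod 4) ↑n'
            = ((pair s (↑n' : Fin s.m → ZMod 4) ↑n + pair s (↑n' : Fin s.m → ZMod 4) ↑n)
              + pair s (↑n' : Fin s.m → ZMod 4) ↑n')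
              + (pair s (↑n' : Fin s.m → ZMod 4) y + pair s (↑n' : Fin s.m → ZMod 4) y) := by
          ring
        rw [harr, hval, chi_add, chi_two]
        ring
      have hS : (∑ n : ↥N, f n) = - ∑ n : ↥N, f n := by
        have h1 := (Equiv.sum_comp (Equiv.addRight n₀) f).symm
        simp only [Equiv.coe_addRight] at h1
        have h2 : ∑ x : ↥N, f (x + n₀) = - ∑ x : ↥N, f x := by
          rw [Finset.sum_congr rfl fun n _ => hshift n, Finset.sum_neg_distrib]
        exact h1.trans h2
      have hS0 : (∑ n : ↥N, f n) = 0 := by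
        have h2 : (2 : ℂ) * (∑ n : ↥N, f n) = 0 := by
          rw [two_mul]; nth_rewrite 1 [hS]; ring
        have := mul_eq_zero.mp h2
        simpa using this
      rw [hg]
      simp only [hS0]
      have : ¬ (∀ y ∈ N, pair s (↑n' : Fin s.m → ZMod 4) y
          + pair s (↑n' : Fin s.m → ZMod 4) y = 0) := by
        push_neg
        exact ⟨y, hy, by rw [hval]; decide⟩
      rw [if_neg this]
      simp
  have htau : tau (Fin s.m) s.G = ∑ n' : ↥N', (g n' : ℂ) := by
    rw [tau_pair]
    rw [← Equiv.sum_comp e.toEquiv (fun x => chi (pair s x x))]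
    have : ∀ p : ↥N × ↥N', chi (pair s (e.toEquiv p) (e.toEquiv p))
        = chi (pair s (↑p.1 + ↑p.2) (↑p.1 + ↑p.2)) := by
      intro p
      rw [show (e.toEquiv p : Fin s.m → ZMod 4) = ↑p.1 + ↑p.2 from hcoe p]
    rw [Finset.sum_congr rfl fun p _ => this p, Fintype.sum_prod_type, Finset.sum_comm]
    exact Finset.sum_congr rfl fun n' _ => inner n'
  refine ⟨∑ n' : ↥N', g n', ?_, ?_⟩
  · have hpos : 0 < g ⟨0, N'.zero_mem⟩ := by
      rw [hg]
      simp only []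
      rw [if_pos]
      · exact Fintype.card_pos_iff.mpr ⟨⟨0, N.zero_mem⟩⟩
      · intro y hy
        have h0 : pair s ((⟨0, N'.zero_mem⟩ : ↥N') : Fin s.m → ZMod 4) y = 0 :=
          pair_zero_left s y
        rw [h0, add_zero]
    calc 0 < g ⟨0, N'.zero_mem⟩ := hpos
      _ ≤ ∑ n' : ↥N', g n' :=
        Finset.single_le_sum (fun i _ => Nat.zero_le _) (Finset.mem_univ _)
  · rw [htau, Nat.cast_sum]

/-! ### `ω ⊕ ω` is split -/

def Nsub : Submodule (ZMod 4) (Fin 4 → ZMod 4) where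
  carrier := {x | x 2 = x 0 ∧ x 3 = 3 * x 1}
  zero_mem' := by constructor <;> simp
  add_mem' := by
    rintro x y ⟨hx1, hx2⟩ ⟨hy1, hy2⟩
    constructor <;> simp only [Pi.add_apply, hx1, hx2, hy1, hy2] <;> ring
  smul_mem' := by
    rintro c x ⟨h1, h2⟩
    constructor <;> simp only [Pi.smul_apply, smul_eq_mul, h1, h2] <;> ring

def Nsub' : Submodule (ZMod 4) (Fin 4 → ZMod 4) where
  carrier := {x | x 0 = 0 ∧ x 1 = 0}
  zero_mem' := by constructor <;> simp
  add_mem' := by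
    rintro x y ⟨hx1, hx2⟩ ⟨hy1, hy2⟩
    constructor <;> simp [Pi.add_apply, hx1, hx2, hy1, hy2]
  smul_mem' := by
    rintro c x ⟨h1, h2⟩
    constructor <;> simp [Pi.smul_apply, h1, h2]

lemma Nsub_isCompl : IsCompl Nsub Nsub' := by
  constructor
  · rw [disjoint_iff_inf_le]
    rintro x ⟨⟨h1, h2⟩, ⟨h3, h4⟩⟩
    have : ∀ i : Fin 4, x i = 0 := by
      intro i
      fin_cases i
      · exact h3
      · exact h4
      · show x 2 = 0
        rw [h1, h3]
      · show x 3 = 0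
        rw [h2, h4, mul_zero]
    exact funext this
  · rw [codisjoint_iff_le_sup]
    intro x _
    rw [Submodule.mem_sup]
    refine ⟨![x 0, x 1, x 0, 3 * x 1], ⟨rfl, rfl⟩, x - ![x 0, x 1, x 0, 3 * x 1],
      ⟨?_, ?_⟩, by abel⟩
    · show x 0 - x 0 = 0
      simp
    · show x 1 - x 1 = 0
      simp

set_option maxRecDepth 10000 in
lemma key4 : ∀ x : Fin 4 → ZMod 4,
    (x 2 = x 0 ∧ x 3 = 3 * x 1) ↔
      (∀ y : Fin 4 → ZMod 4, (y 2 = y 0 ∧ y 3 = 3 * y 1) →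
        pair (orthSum omegaForm omegaForm) x y = 0) := by unfold pair; decide

lemma omega2_split : IsSplit (orthSum omegaForm omegaForm) :=
  ⟨Nsub, ⟨Nsub', Nsub_isCompl⟩, by
    ext x
    exact key4 x⟩

lemma zero_split : IsSplit zeroForm := by
  refine ⟨⊥, ⟨⊤, isCompl_bot_top⟩, ?_⟩
  ext x
  have hx : x = 0 := funext fun i => Fin.elim0 i
  subst hx
  exact ⟨fun _ => (orthCompl zeroForm ⊥).zero_mem, fun _ => Submodule.zero_mem ⊥⟩

lemma iso5 : Isometric (orthSum (orthSum omegaForm omegaForm) zeroForm)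
    (orthSum zeroForm (orthSum omegaForm omegaForm)) := by
  refine ⟨rfl, 1, by simp, ?_⟩
  rw [Matrix.transpose_one, Matrix.mul_one, Matrix.one_mul]
  decide

end AuxiliaryLemmas

/-- The form `ω` with matrix `((2,1),(1,2))` over `Z/4Z` is nondegenerate with
determinant `3`, has trivial discriminant in `(Z/4Z)*/((Z/4Z)*)²`, and represents
a nonzero element of order 2 in the Witt ring `W(Z/4Z)`. -/
theorem omega_nonzero_order_two :
    omegaForm.G.det = 3 ∧
    IsUnit omegaForm.G.det ∧
    (∃ v : ZMod 4, IsUnit v ∧ (-1 : ZMod 4) * omegaForm.G.det = v ^ 2) ∧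
    ¬ WittEquiv omegaForm zeroForm ∧
    WittEquiv (orthSum omegaForm omegaForm) zeroForm := by
  refine ⟨by decide, omegaForm.nondeg, ⟨1, isUnit_one, by decide⟩, ?_, ?_⟩
  · rintro ⟨s, t, hs, ht, hiso⟩
    obtain ⟨cs, hcs, hts⟩ := tau_split s hs
    obtain ⟨ct, hct, htt⟩ := tau_split t ht
    have h1 := tau_isometric hiso
    rw [tau_orthSum, tau_orthSum, tau_omega, tau_zeroForm, hts, htt] at h1
    have h2 : ((8 * cs + ct : ℕ) : ℂ) = 0 := by
      push_cast
      linear_combination -h1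
    have h3 : (8 * cs + ct : ℕ) = 0 := by exact_mod_cast h2
    omega
  · exact ⟨zeroForm, orthSum omegaForm omegaForm, zero_split, omega2_split, iso5⟩


end WittZ4
end

section
/- For the symplectic group over a commutative ring, conjugation of the elementary symplectic matrix U_{jj}(q) = ((1_g, q e_{jj}),(0, 1_g)) by A_{ij} = ((1_g - e_{ij}, 0),(0, 1_g + e_{ji})) yields A_{ij} U_{jj}(q) A_{ij}⁻¹ = U_{ii}(q) U_{jj}(q) U_{ij}(q)⁻¹, where U_{ii}(q) = ((1_g, q e_{ii}),(0,1_g)) and U_{ij}(q) = ((1_g, q(e_{ij}+e_{ji})),(0,1_g)). -/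
open Matrix

/-- Conjugating the elementary symplectic matrix `U_{jj}(q)` by
`A_{ij} = ((1 - e_{ij}, 0),(0, 1 + e_{ji}))` gives
`A_{ij} U_{jj}(q) A_{ij}⁻¹ = U_{ii}(q) U_{jj}(q) U_{ij}(q)⁻¹`. -/
theorem conj_Ujj_relation (R : Type*) [CommRing R] (g : ℕ) (hg : 2 ≤ g)
    (i j : Fin g) (hij : i ≠ j) (q : R) :
    let e : Fin g → Fin g → Matrix (Fin g) (Fin g) R :=
      fun a b => Matrix.single a b 1
    let Uij : Matrix (Fin g ⊕ Fin g) (Fin g ⊕ Fin g) R :=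
      Matrix.fromBlocks 1 (q • (e i j + e j i)) 0 1
    let Uii : Matrix (Fin g ⊕ Fin g) (Fin g ⊕ Fin g) R :=
      Matrix.fromBlocks 1 (q • e i i) 0 1
    let Ujj : Matrix (Fin g ⊕ Fin g) (Fin g ⊕ Fin g) R :=
      Matrix.fromBlocks 1 (q • e j j) 0 1
    let A : Matrix (Fin g ⊕ Fin g) (Fin g ⊕ Fin g) R :=
      Matrix.fromBlocks (1 - e i j) 0 0 (1 + e j i)
    A * Ujj * A⁻¹ = Uii * Ujj * Uij⁻¹ := by
  intro e Uij Uii Ujj A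
  have hee : e i j * e i j = 0 := single_mul_single_of_ne (c := (1:R)) i j i hij.symm 1
  have hee' : e j i * e j i = 0 := single_mul_single_of_ne (c := (1:R)) j i j hij 1
  have hjj : e i j * e j j = e i j := by simp [e]
  have hji : e j j * e j i = e j i := by simp [e]
  have hii : e i j * e j i = e i i := by simp [e]
  have hAinv : A⁻¹ = Matrix.fromBlocks (1 + e i j) 0 0 (1 - e j i) := by
    apply inv_eq_right_inv
    show Matrix.fromBlocks (1 - e i j) 0 0 (1 + e j i) * _ = 1
    rw [Matrix.fromBlocks_multiply]
    simp [sub_mul, mul_add, add_mul, mul_sub, hee, hee', ← Matrix.fromBlocks_one]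
  have hUinv : Uij⁻¹ = Matrix.fromBlocks 1 (-(q • (e i j + e j i))) 0 1 := by
    apply inv_eq_right_inv
    show Matrix.fromBlocks 1 (q • (e i j + e j i)) 0 1 * _ = 1
    rw [Matrix.fromBlocks_multiply]
    simp only [Matrix.mul_one, Matrix.one_mul, Matrix.mul_zero, Matrix.zero_mul,
      add_zero, zero_add, neg_add_cancel, ← Matrix.fromBlocks_one]
  rw [hAinv, hUinv]
  show Matrix.fromBlocks (1 - e i j) 0 0 (1 + e j i) * Matrix.fromBlocks 1 (q • e j j) 0 1 * _ =
    Matrix.fromBlocks 1 (q • e i i) 0 1 * Matrix.fromBlocks 1 (q • e j j) 0 1 * _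
  rw [Matrix.fromBlocks_multiply, Matrix.fromBlocks_multiply,
    Matrix.fromBlocks_multiply, Matrix.fromBlocks_multiply]
  rw [Matrix.fromBlocks_inj]
  refine ⟨?_, ?_, by simp, by simp [add_mul, mul_sub, hee']⟩
  · simp [sub_mul, mul_add, add_mul, mul_sub, hee, hee']
  · simp only [Matrix.one_mul, Matrix.mul_one, Matrix.mul_zero, Matrix.zero_mul,
      add_zero, zero_add, Matrix.smul_mul, Matrix.mul_smul, sub_mul, mul_sub, hjj, hji, hii]
    module
end
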